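/- Any nonzero finite-dimensional commutative real algebra (A, ∘) metrized by a positive definite invariant bilinear form h contains a nonzero idempotent, i.e., an element c ≠ 0 with c∘c = c. -/

import Mathlib

/-- A nonzero finite-dimensional Euclidean metrized commutative real algebra
contains a nonzero idempotent. -/
theorem exists_nonzero_idempotent
    {A : Type*} [AddCommGroup A] [Module ℝ A] [FiniteDimensional ℝ A]
    (mul : A →ₗ[ℝ] A →ₗ[ℝ] A)
    (hcomm : ∀ x y : A, mul x y = mul y x)
    (h : A →ₗ[ℝ] A →ₗ[ℝ] ℝ)
    (hsymm : ∀ x y : A, h x y = h y x)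
    (hpos : ∀ x : A, x ≠ 0 → 0 < h x x)
    (hinv : ∀ x y z : A, h (mul x y) z = h x (mul y z))
    (hnz : mul ≠ 0) :
    ∃ c : A, c ≠ 0 ∧ mul c c = c := by
  classical
  -- nondegeneracy of h
  have hnd : ∀ v : A, (∀ z : A, h v z = 0) → v = 0 := by
    intro v hv
    by_contra hv0
    exact absurd (hv v) (ne_of_gt (hpos v hv0))
  -- full symmetry of the trilinear form
  have Tswap : ∀ x y z : A, h (mul x y) z = h (mul x z) y := by
    intro x y z
    rw [hinv x y z, hinv x z y, hcomm z y]
  -- step 1 : the cubic form is not identically zero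
  have hex : ∃ x : A, h (mul x x) x ≠ 0 := by
    by_contra hall
    push_neg at hall
    apply hnz
    have h2 : ∀ x y : A, h (mul x x) y = 0 := by
      intro x y
      have e1 := hall (x + y)
      have e2 := hall (x - y)
      have ex := hall x
      have ey := hall y
      simp only [map_add, map_sub, LinearMap.add_apply, LinearMap.sub_apply] at e1 e2
      have s1 : h (mul x y) x = h (mul x x) y := Tswap x y x
      have s2 : h (mul y x) x = h (mul x x) y := by rw [hcomm y x]; exact Tswap x y x
      have s3 : h (mul x y) y = h (mul y y) x := by rw [hcomm x y]; exact Tswap y x y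
      have s4 : h (mul y x) y = h (mul y y) x := Tswap y x y
      linarith
    have h3 : ∀ x z : A, mul x z = 0 := by
      intro x z
      apply hnd
      intro y
      have e := h2 (x + z) y
      simp only [map_add, LinearMap.add_apply] at e
      have s1 : h (mul z x) y = h (mul x z) y := by rw [hcomm z x]
      have ex := h2 x y
      have ez := h2 z y
      linarith
    ext x z
    simp [h3]
  -- endow A with the inner product coming from h
  let core : InnerProductSpace.Core ℝ A :=
    { inner := fun x y => h x y
      conj_inner_symm := fun x y => by simpa using hsymm y x
      re_inner_nonneg := fun x => by
        by_cases hx : x = 0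
        · simp [hx]
        · exact le_of_lt (by simpa using hpos x hx)
      add_left := fun x y z => by simp
      smul_left := fun x y r => by simp
      definite := fun x hx => by
        by_contra hx0
        exact absurd hx (ne_of_gt (by simpa using hpos x hx0)) }
  letI : NormedAddCommGroup A := core.toNormedAddCommGroup
  letI : InnerProductSpace ℝ A := InnerProductSpace.ofCore core.toCore
  have hinner : ∀ x y : A, h x y = @inner ℝ A _ x y := fun x y => rfl
  have hnormsq : ∀ x : A, h x x = ‖x‖ ^ 2 := fun x => by
    rw [hinner]; exact real_inner_self_eq_norm_sq x
  -- continuous linear map versions of mul and h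
  let M : A →L[ℝ] A →L[ℝ] A :=
    LinearMap.toContinuousLinearMap
      ((LinearMap.toContinuousLinearMap :
        (A →ₗ[ℝ] A) ≃ₗ[ℝ] (A →L[ℝ] A)).toLinearMap ∘ₗ mul)
  let H : A →L[ℝ] A →L[ℝ] ℝ :=
    LinearMap.toContinuousLinearMap
      ((LinearMap.toContinuousLinearMap :
        (A →ₗ[ℝ] ℝ) ≃ₗ[ℝ] (A →L[ℝ] ℝ)).toLinearMap ∘ₗ h)
  have hM : ∀ x y : A, M x y = mul x y := fun x y => rfl
  have hH : ∀ x y : A, H x y = h x y := fun x y => rfl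
  have bM := M.isBoundedBilinearMap
  have bH := H.isBoundedBilinearMap
  -- the cubic form φ and the constraint g
  set φ : A → ℝ := fun x => h (mul x x) x with hφdef
  -- the sphere
  set S : Set A := {x : A | h x x = 1} with hSdef
  have hSsphere : S = Metric.sphere (0 : A) 1 := by
    ext x
    simp only [hSdef, Set.mem_setOf_eq, Metric.mem_sphere, dist_zero_right]
    rw [hnormsq x]
    constructor
    · intro hx
      nlinarith [norm_nonneg x]
    · intro hx; rw [hx]; norm_num
  have hScompact : IsCompact S := by rw [hSsphere]; exact isCompact_sphere 0 1
  -- a point of S with nonzero cubic value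
  obtain ⟨x₀, hx₀⟩ := hex
  have hx₀ne : x₀ ≠ 0 := by
    rintro rfl
    simp at hx₀
  have hq0 : 0 < h x₀ x₀ := hpos x₀ hx₀ne
  set r : ℝ := (Real.sqrt (h x₀ x₀))⁻¹ with hrdef
  have hrpos : 0 < r := by positivity
  set y : A := r • x₀ with hydef
  have hyS : y ∈ S := by
    simp only [hSdef, Set.mem_setOf_eq, hydef, map_smul, LinearMap.smul_apply, smul_eq_mul]
    rw [hrdef]
    rw [show (Real.sqrt (h x₀ x₀))⁻¹ * ((Real.sqrt (h x₀ x₀))⁻¹ * h x₀ x₀)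
        = (Real.sqrt (h x₀ x₀) * Real.sqrt (h x₀ x₀))⁻¹ * h x₀ x₀ by
      rw [mul_inv]; ring]
    rw [Real.mul_self_sqrt (le_of_lt hq0)]
    field_simp
  have hφy : φ y ≠ 0 := by
    simp only [hφdef, hydef, map_smul, LinearMap.smul_apply, smul_eq_mul]
    intro hc
    apply hx₀
    have : r * (r * (r * h (mul x₀ x₀) x₀)) = 0 := hc
    rcases mul_eq_zero.1 this with h1 | h1
    · exact absurd h1 (ne_of_gt hrpos)
    rcases mul_eq_zero.1 h1 with h1 | h1
    · exact absurd h1 (ne_of_gt hrpos)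
    rcases mul_eq_zero.1 h1 with h1 | h1
    · exact absurd h1 (ne_of_gt hrpos)
    exact h1
  have hnyS : -y ∈ S := by
    simp only [hSdef, Set.mem_setOf_eq] at hyS ⊢
    simpa using hyS
  have hφny : φ (-y) = -φ y := by
    simp [hφdef]
  -- continuity of φ
  have hφcont : Continuous φ := by
    have : φ = fun x => (fun p : A × A => H p.1 p.2) ((fun x : A => M x x) x, x) := rfl
    rw [this]
    exact bH.continuous.comp
      ((bM.continuous.comp (continuous_id.prodMk continuous_id)).prodMk continuous_id)
  -- maximize φ on S
  obtain ⟨c, hcS, hcmax⟩ := hScompact.exists_isMaxOn ⟨y, hyS⟩ hφcont.continuousOn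
  have hc1 : h c c = 1 := hcS
  have hcne : c ≠ 0 := by
    intro hc0
    rw [hc0] at hc1
    simp at hc1
  have hφc : 0 < φ c := by
    rcases lt_or_gt_of_ne hφy with hy' | hy'
    · have h1 : φ (-y) ≤ φ c := hcmax hnyS
      rw [hφny] at h1
      linarith
    · have h1 : φ y ≤ φ c := hcmax hyS
      linarith
  -- Lagrange multipliers
  set g : A → ℝ := fun x => H x x with hgdef
  have hgc : {x : A | g x = g c} = S := by
    ext x
    simp only [Set.mem_setOf_eq, hgdef, hSdef, hH, hc1]
  have hextr : IsLocalExtrOn φ {x : A | g x = g c} c := by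
    rw [hgc]
    exact (hcmax.filter_mono inf_le_right).isExtr
  have hdiag : HasStrictFDerivAt (fun x : A => (x, x))
      ((ContinuousLinearMap.id ℝ A).prod (ContinuousLinearMap.id ℝ A)) c :=
    (hasStrictFDerivAt_id c).prodMk (hasStrictFDerivAt_id c)
  have hqc : HasStrictFDerivAt (fun x : A => M x x)
      ((bM.deriv (c, c)).comp ((ContinuousLinearMap.id ℝ A).prod (ContinuousLinearMap.id ℝ A)))
      c := by exact HasStrictFDerivAt.comp (f := fun x : A => (x, x)) c (bM.hasStrictFDerivAt (c, c)) hdiag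
  have hgc' : HasStrictFDerivAt g
      ((bH.deriv (c, c)).comp ((ContinuousLinearMap.id ℝ A).prod (ContinuousLinearMap.id ℝ A)))
      c := by exact HasStrictFDerivAt.comp (f := fun x : A => (x, x)) c (bH.hasStrictFDerivAt (c, c)) hdiag
  have hpair : HasStrictFDerivAt (fun x : A => (M x x, x))
      (((bM.deriv (c, c)).comp
          ((ContinuousLinearMap.id ℝ A).prod (ContinuousLinearMap.id ℝ A))).prod
        (ContinuousLinearMap.id ℝ A)) c :=
    hqc.prodMk (hasStrictFDerivAt_id c)
  have hφc' : HasStrictFDerivAt φ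
      ((bH.deriv (M c c, c)).comp
        (((bM.deriv (c, c)).comp
          ((ContinuousLinearMap.id ℝ A).prod (ContinuousLinearMap.id ℝ A))).prod
          (ContinuousLinearMap.id ℝ A))) c := by
    exact HasStrictFDerivAt.comp (f := fun x : A => (M x x, x)) c (bH.hasStrictFDerivAt (M c c, c)) hpair
  obtain ⟨a, b, hab0, hab⟩ := hextr.exists_multipliers_of_hasStrictFDerivAt_1d hgc' hφc'
  -- translate the multiplier equation
  have key : ∀ v : A, a * (2 * h c v) + b * (3 * h (mul c c) v) = 0 := by
    intro v
    have := ContinuousLinearMap.ext_iff.1 hab v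
    simp only [ContinuousLinearMap.add_apply, ContinuousLinearMap.smul_apply,
      ContinuousLinearMap.comp_apply, ContinuousLinearMap.prod_apply,
      ContinuousLinearMap.id_apply, IsBoundedBilinearMap.deriv_apply,
      ContinuousLinearMap.zero_apply, smul_eq_mul, map_add] at this
    simp only [hM, hH] at this
    have s1 : h v c = h c v := hsymm v c
    have s2 : h (mul c v) c = h (mul c c) v := Tswap c v c
    have s3 : h (mul v c) c = h (mul c c) v := by rw [hcomm v c]; exact Tswap c v c
    rw [s1, s2, s3] at this
    linear_combination this
  have hbne : b ≠ 0 := by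
    intro hb0
    have hane : a ≠ 0 := by
      intro ha0
      exact hab0 (by simp [ha0, hb0, Prod.ext_iff])
    have hk := key c
    rw [hb0, hc1] at hk
    have : a = 0 := by linarith
    exact hane this
  -- derive mul c c = μ • c
  have heig : (3 * b) • mul c c + (2 * a) • c = 0 := by
    apply hnd
    intro v
    have := key v
    simp only [map_add, map_smul, LinearMap.add_apply, LinearMap.smul_apply, smul_eq_mul]
    linarith
  set μ : ℝ := -(2 * a) / (3 * b) with hμdef
  have h3b : (3 : ℝ) * b ≠ 0 := mul_ne_zero three_ne_zero hbne
  have heq : (3 * b) • mul c c = (-(2 * a)) • c := by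
    rw [add_eq_zero_iff_eq_neg] at heig
    rw [heig, neg_smul]
  have hmulcc : mul c c = μ • c := by
    calc mul c c = (3 * b)⁻¹ • ((3 * b) • mul c c) := by
          rw [smul_smul, inv_mul_cancel₀ h3b, one_smul]
      _ = (3 * b)⁻¹ • ((-(2 * a)) • c) := by rw [heq]
      _ = μ • c := by rw [smul_smul]; congr 1; rw [hμdef, div_eq_inv_mul]
  have hμne : μ ≠ 0 := by
    intro hμ0
    rw [hμ0, zero_smul] at hmulcc
    have : φ c = 0 := by simp [hφdef, hmulcc]
    linarith
  refine ⟨μ⁻¹ • c, ?_, ?_⟩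
  · simp only [ne_eq, smul_eq_zero, inv_eq_zero, not_or]
    exact ⟨hμne, hcne⟩
  · have hcalc : mul (μ⁻¹ • c) (μ⁻¹ • c) = (μ⁻¹ * (μ⁻¹ * μ)) • c := by
      simp only [map_smul, LinearMap.smul_apply, hmulcc, smul_smul]
    rw [hcalc, inv_mul_cancel₀ hμne, mul_one]
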